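/- Let F = {F_i : i ∈ ℕ} be a countable family of contractive similarities on ℝ. If there exists a unique bounded invariant set for F, then r := sup_i r_i < 1, where r_i is the similarity ratio of F_i. -/

import Mathlib

open Metric Set

/-- A nonempty set `E` is invariant for the family `F` if `E = cl(⋃ i, F i '' E)`. -/
def IsInvariantSet {X : Type*} [TopologicalSpace X] (F : ℕ → X → X) (E : Set X) : Prop :=
  E.Nonempty ∧ E = closure (⋃ i : ℕ, F i '' E)

/-- A similarity on ℝ is affine: F x = F 0 + ε r x with ε = ±1. -/
lemma affine_of_sim (F : ℝ → ℝ) (r : ℝ) (hrpos : 0 < r)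
    (h : ∀ x y : ℝ, |F x - F y| = r * |x - y|) :
    ∃ ε : ℝ, (ε = 1 ∨ ε = -1) ∧ ∀ x, F x = F 0 + ε * r * x := by
  have hsq : ∀ x y : ℝ, (F x - F y) ^ 2 = r ^ 2 * (x - y) ^ 2 := by
    intro x y
    have h2 := congrArg (· ^ 2) (h x y)
    simpa [mul_pow, sq_abs] using h2
  have hu2 : (F 1 - F 0) ^ 2 = r ^ 2 := by
    have := hsq 1 0
    simpa using this
  have hune : F 1 - F 0 ≠ 0 := by
    intro h0
    rw [h0] at hu2
    nlinarith
  have key : ∀ x : ℝ, (F 1 - F 0) * (F x - F 0) = r ^ 2 * x := by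
    intro x
    linear_combination (hsq x 0 - hsq x 1 + hsq 1 0) / 2
  refine ⟨(F 1 - F 0) / r, ?_, ?_⟩
  · have hz : (F 1 - F 0 - r) * (F 1 - F 0 + r) = 0 := by nlinarith
    rcases mul_eq_zero.mp hz with h1 | h1
    · left
      rw [div_eq_one_iff_eq (ne_of_gt hrpos)]
      linarith
    · right
      rw [div_eq_iff (ne_of_gt hrpos)]
      linarith
  · intro x
    have h1 : (F 1 - F 0) * (F x) = (F 1 - F 0) * (F 0 + (F 1 - F 0) * x) := by
      linear_combination key x - x * hu2
    have h2 : F x = F 0 + (F 1 - F 0) * x := mul_left_cancel₀ hune h1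
    rw [h2, div_mul_cancel₀ _ (ne_of_gt hrpos)]

set_option maxHeartbeats 1000000 in
theorem unique_bounded_invariant_implies_sup_lt_one
    (F : ℕ → ℝ → ℝ) (r : ℕ → ℝ) (hr : ∀ i, 0 < r i ∧ r i < 1)
    (hsim : ∀ i, ∀ x y : ℝ, |F i x - F i y| = r i * |x - y|)
    (huniq : ∃! E : Set ℝ, Bornology.IsBounded E ∧ IsInvariantSet F E) :
    (⨆ i, r i) < 1 := by
  by_contra hcon
  push_neg at hcon
  obtain ⟨E, ⟨hEb, hEne, hEinv⟩, hEuniq⟩ := huniq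
  have hEclosed : IsClosed E := by rw [hEinv]; exact isClosed_closure
  have hbdd : BddAbove E := hEb.bddAbove
  have hbddb : BddBelow E := hEb.bddBelow
  set a := sInf E with ha
  set b := sSup E with hb
  have hab : a ≤ b := csInf_le_csSup hEne hbddb hbdd
  have hsubE : ∀ i, F i '' E ⊆ E := by
    intro i
    refine (subset_iUnion (fun j => F j '' E) i).trans ?_
    exact subset_closure.trans hEinv.ge
  have hFaE : ∀ i, F i a ∈ E := fun i =>
    hsubE i ⟨a, hEclosed.csInf_mem hEne hbddb, rfl⟩
  have hFbE : ∀ i, F i b ∈ E := fun i =>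
    hsubE i ⟨b, hEclosed.csSup_mem hEne hbdd, rfl⟩
  have hFa : ∀ i, a ≤ F i a ∧ F i a ≤ b :=
    fun i => ⟨csInf_le hbddb (hFaE i), le_csSup hbdd (hFaE i)⟩
  have hFb : ∀ i, a ≤ F i b ∧ F i b ≤ b :=
    fun i => ⟨csInf_le hbddb (hFbE i), le_csSup hbdd (hFbE i)⟩
  choose ε hε hFeq using fun i => affine_of_sim (F i) (r i) (hr i).1 (hsim i)
  have hnear : ∀ δ : ℝ, 0 < δ → ∃ i, 1 - δ < r i := by
    intro δ hδ
    by_contra h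
    push_neg at h
    have : (⨆ i, r i) ≤ 1 - δ := ciSup_le h
    linarith
  set B := Icc (a - 1) (b + 1) with hBdef
  have hend : ∀ i, (a - 1 ≤ F i (a - 1) ∧ F i (a - 1) ≤ b + 1) ∧
      (a - 1 ≤ F i (b + 1) ∧ F i (b + 1) ≤ b + 1) := by
    intro i
    have h1 := hFa i
    have h2 := hFb i
    have hri := hr i
    have e1 : F i (a - 1) = F i a - ε i * r i := by
      linear_combination hFeq i (a - 1) - hFeq i a
    have e2 : F i (b + 1) = F i b + ε i * r i := by
      linear_combination hFeq i (b + 1) - hFeq i b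
    rcases hε i with h | h <;> rw [h] at e1 e2 <;>
      exact ⟨⟨by linarith, by linarith⟩, ⟨by linarith, by linarith⟩⟩
  have himg : ∀ i, F i '' B ⊆ B := by
    intro i
    rintro _ ⟨y, hy, rfl⟩
    have hri := (hr i).1
    have h1 := (hend i).1
    have h2 := (hend i).2
    rw [hFeq i] at h1 h2
    rw [hBdef, mem_Icc, hFeq i]
    have hy1 : a - 1 ≤ y := hy.1
    have hy2 : y ≤ b + 1 := hy.2
    have hm1 : r i * (a - 1) ≤ r i * y := mul_le_mul_of_nonneg_left hy1 hri.le
    have hm2 : r i * y ≤ r i * (b + 1) := mul_le_mul_of_nonneg_left hy2 hri.le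
    rcases hε i with h | h <;> rw [h] at h1 h2 ⊢ <;>
      exact ⟨by nlinarith, by nlinarith⟩
  have hBinv : IsInvariantSet F B := by
    refine ⟨nonempty_Icc.mpr (by linarith), Subset.antisymm ?_ ?_⟩
    · intro x hx
      rw [Metric.mem_closure_iff]
      intro δ hδ
      have hx1 : a - 1 ≤ x := hx.1
      have hx2 : x ≤ b + 1 := hx.2
      have hLpos : (0:ℝ) < b - a + 2 := by linarith
      obtain ⟨i, hi⟩ := hnear (δ / (b - a + 2)) (by positivity)
      have hri := hr i
      have hrne : r i ≠ 0 := ne_of_gt hri.1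
      have h1 := (hend i).1
      have h2 := (hend i).2
      rw [hFeq i] at h1 h2
      have hnn : (0:ℝ) ≤ (1 - r i) * (b - a + 2) :=
        mul_nonneg (by linarith [hri.2]) (by linarith)
      set y₀ := ε i * (x - F i 0) / r i with hy₀
      have hmul : ε i * r i * y₀ = x - F i 0 := by
        rw [hy₀]
        field_simp
        rcases hε i with h | h <;> rw [h] <;> ring
      have h3 : r i * y₀ = ε i * (x - F i 0) := by
        rcases hε i with h | h <;> rw [h] at hmul ⊢ <;> linarith
      have hFy₀ : F i y₀ = x := by rw [hFeq i]; linarith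
      have key : ∃ y ∈ B, |x - F i y| ≤ (1 - r i) * (b - a + 2) := by
        rcases le_total (b + 1) y₀ with hc | hc
        · have hc' : r i * (b + 1) ≤ r i * y₀ := mul_le_mul_of_nonneg_left hc hri.1.le
          refine ⟨b + 1, ⟨by linarith, le_refl _⟩, ?_⟩
          rw [hFeq i, abs_le]
          rcases hε i with h | h <;> rw [h] at h1 h2 h3 ⊢ <;>
            exact ⟨by nlinarith, by nlinarith⟩
        rcases le_total y₀ (a - 1) with hc2 | hc2
        · have hc' : r i * y₀ ≤ r i * (a - 1) := mul_le_mul_of_nonneg_left hc2 hri.1.le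
          refine ⟨a - 1, ⟨le_refl _, by linarith⟩, ?_⟩
          rw [hFeq i, abs_le]
          rcases hε i with h | h <;> rw [h] at h1 h2 h3 ⊢ <;>
            exact ⟨by nlinarith, by nlinarith⟩
        · refine ⟨y₀, ⟨hc2, hc⟩, ?_⟩
          rw [hFy₀]
          simpa using hnn
      obtain ⟨y, hyB, hybd⟩ := key
      refine ⟨F i y, mem_iUnion.mpr ⟨i, mem_image_of_mem _ hyB⟩, ?_⟩
      rw [Real.dist_eq]
      have h4 : (1 - r i) * (b - a + 2) < δ :=
        (lt_div_iff₀ hLpos).mp (by linarith)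
      linarith
    · exact closure_minimal (iUnion_subset himg) isClosed_Icc
  have hBE : B = E := hEuniq B ⟨isBounded_Icc _ _, hBinv⟩
  have hmem : b + 1 ∈ E := by
    rw [← hBE]
    exact ⟨by linarith, le_refl _⟩
  have : b + 1 ≤ b := le_csSup hbdd hmem
  linarith
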